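/- arXiv:1212.1697 — 2 statements merged into one kernel-verified Lean document; each statement's English description precedes it below -/
import Mathlib

section
/- Let 1 < p < ∞, α ∈ (0,1), t > 0, and let v be a weight on ℝⁿ with g(r) := ∫_{|y|<r} v(y)^{−p'} dy finite for every r > 0 and g(t) > 0. Define the test function f(x) := (p'/(1−α)) · g(t)^{−α/p' − 1/p} · v(x)^{−p'} for |x| < t, and f(x) := g(|x|)^{−α/p' − 1/p} · v(x)^{−p'} for |x| > t. Then ‖f‖_{L_{p,v}} = ( ∫_{ℝⁿ} (f(x) v(x))^p dx )^{1/p} ≤ [ (p'/(1−α))^p + 1/(α(p−1)) ]^{1/p} · g(t)^{−α/p'}. -/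
open MeasureTheory Set ENNReal

noncomputable section

abbrev Rn (n : ℕ) := EuclideanSpace ℝ (Fin n)

/-- `gfun p v r = ∫_{|y|<r} v(y)^{-p'} dy` with `p' = p/(p-1)` (Bochner integral). -/
def gfun (n : ℕ) (p : ℝ) (v : Rn n → ℝ) (r : ℝ) : ℝ :=
  ∫ y in {y : Rn n | ‖y‖ < r}, v y ^ (-(p / (p - 1)))

/-- The test function used in the necessity part of the two-weight Hardy criterion:
`f(x) = (p'/(1-α)) g(t)^{-α/p'-1/p} v(x)^{-p'}` if `|x| < t`, and
`f(x) = g(|x|)^{-α/p'-1/p} v(x)^{-p'}` if `|x| ≥ t`. -/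
def testFun (n : ℕ) (p α t : ℝ) (v : Rn n → ℝ) (x : Rn n) : ℝ :=
  if ‖x‖ < t then
    (p / (p - 1) / (1 - α)) * gfun n p v t ^ (-(α / (p / (p - 1))) - 1 / p) * v x ^ (-(p / (p - 1)))
  else
    gfun n p v ‖x‖ ^ (-(α / (p / (p - 1))) - 1 / p) * v x ^ (-(p / (p - 1)))

namespace TestAux

open Filter


variable {n : ℕ} {p : ℝ} {v : Rn n → ℝ}

def wde (n : ℕ) (p : ℝ) (v : Rn n → ℝ) : Measure (Rn n) :=
  (volume : Measure (Rn n)).withDensity fun x => ENNReal.ofReal (v x ^ (-(p / (p - 1))))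

lemma ballMeas (r : ℝ) : MeasurableSet {x : Rn n | ‖x‖ < r} :=
  (isOpen_lt continuous_norm continuous_const).measurableSet

lemma vpow_nonneg (hv' : ∀ᵐ x ∂(volume : Measure (Rn n)), 0 < v x) :
    ∀ᵐ x ∂(volume : Measure (Rn n)), 0 ≤ v x ^ (-(p / (p - 1))) :=
  hv'.mono fun _ hx => Real.rpow_nonneg hx.le _

lemma gfun_nonneg (hv' : ∀ᵐ x ∂(volume : Measure (Rn n)), 0 < v x) (r : ℝ) :
    0 ≤ gfun n p v r :=
  integral_nonneg_of_ae (ae_restrict_of_ae (vpow_nonneg hv'))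

lemma gfun_mono (hv' : ∀ᵐ x ∂(volume : Measure (Rn n)), 0 < v x)
    (hfin : ∀ r : ℝ, 0 < r →
      IntegrableOn (fun y => v y ^ (-(p / (p - 1)))) {y : Rn n | ‖y‖ < r}) :
    Monotone (gfun n p v) := by
  intro a b hab
  rcases le_or_gt b 0 with hb | hb
  · have h1 : {y : Rn n | ‖y‖ < b} = ∅ := by
      ext y
      simp only [mem_setOf_eq, mem_empty_iff_false, iff_false, not_lt]
      exact hb.trans (norm_nonneg y)
    have h2 : {y : Rn n | ‖y‖ < a} = ∅ := by
      ext y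
      simp only [mem_setOf_eq, mem_empty_iff_false, iff_false, not_lt]
      exact (hab.trans hb).trans (norm_nonneg y)
    simp [gfun, h1, h2]
  · exact setIntegral_mono_set (hfin b hb) (ae_restrict_of_ae (vpow_nonneg hv'))
      (HasSubset.Subset.eventuallyLE fun y hy => lt_of_lt_of_le hy hab)

lemma wde_ball (hv' : ∀ᵐ x ∂(volume : Measure (Rn n)), 0 < v x)
    (hfin : ∀ r : ℝ, 0 < r →
      IntegrableOn (fun y => v y ^ (-(p / (p - 1)))) {y : Rn n | ‖y‖ < r})
    {r : ℝ} (hr : 0 < r) :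
    wde n p v {x | ‖x‖ < r} = ENNReal.ofReal (gfun n p v r) := by
  rw [wde, withDensity_apply _ (ballMeas r), gfun,
    ofReal_integral_eq_lintegral_ofReal (hfin r hr) (ae_restrict_of_ae (vpow_nonneg hv'))]

lemma wde_sphere (hn : 0 < n) (r : ℝ) : wde n p v {x | ‖x‖ = r} = 0 := by
  haveI : Nonempty (Fin n) := ⟨⟨0, hn⟩⟩
  apply withDensity_absolutelyContinuous (volume : Measure (Rn n)) _
  have h : {x : Rn n | ‖x‖ = r} = Metric.sphere (0 : Rn n) r := by
    ext x; simp [dist_zero_right]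
  rw [h]
  exact Measure.addHaar_sphere volume 0 r


lemma wde_ball_le (hv' : ∀ᵐ x ∂(volume : Measure (Rn n)), 0 < v x)
    (hfin : ∀ r : ℝ, 0 < r →
      IntegrableOn (fun y => v y ^ (-(p / (p - 1)))) {y : Rn n | ‖y‖ < r})
    {R s : ℝ} (hs0 : 0 ≤ s) (hs : ∀ r, 0 < r → r < R → gfun n p v r ≤ s) :
    wde n p v {x | ‖x‖ < R} ≤ ENNReal.ofReal s := by
  rcases le_or_gt R 0 with hR | hR
  · have h : {x : Rn n | ‖x‖ < R} = ∅ := by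
      ext x
      simp only [mem_setOf_eq, mem_empty_iff_false, iff_false, not_lt]
      exact hR.trans (norm_nonneg x)
    simp [h]
  · set rk : ℕ → ℝ := fun k => R * (1 - 1 / (k + 2)) with hrk
    have hfrac : ∀ k : ℕ, 0 < 1 - 1 / ((k : ℝ) + 2) ∧ 1 - 1 / ((k : ℝ) + 2) < 1 := by
      intro k
      have h2 : (0 : ℝ) < (k : ℝ) + 2 := by positivity
      constructor
      · have : 1 / ((k : ℝ) + 2) < 1 := by
          rw [div_lt_one h2]; linarith
        linarith
      · have : 0 < 1 / ((k : ℝ) + 2) := by positivity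
        linarith
    have hrkpos : ∀ k : ℕ, 0 < rk k := fun k => mul_pos hR (hfrac k).1
    have hrklt : ∀ k : ℕ, rk k < R := by
      intro k
      have := (hfrac k).2
      calc rk k < R * 1 := by
            apply mul_lt_mul_of_pos_left this hR
        _ = R := mul_one R
    have hmono : Monotone fun k : ℕ => {x : Rn n | ‖x‖ < rk k} := by
      intro i j hij x hx
      have h1 : rk i ≤ rk j := by
        apply mul_le_mul_of_nonneg_left _ hR.le
        have hij' : (i : ℝ) ≤ (j : ℝ) := Nat.cast_le.mpr hij
        have h2 : (0:ℝ) < (i:ℝ) + 2 := by positivity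
        have h3 : (0:ℝ) < (j:ℝ) + 2 := by positivity
        have : 1 / ((j:ℝ) + 2) ≤ 1 / ((i:ℝ) + 2) := by
          apply one_div_le_one_div_of_le h2; linarith
        linarith
      exact lt_of_lt_of_le hx h1
    have hcover : {x : Rn n | ‖x‖ < R} = ⋃ k, {x : Rn n | ‖x‖ < rk k} := by
      ext x
      simp only [mem_iUnion, mem_setOf_eq]
      constructor
      · intro hx
        have h1 : Tendsto rk atTop (nhds R) := by
          have h2 : Tendsto (fun k : ℕ => ((k : ℝ) + 2)) atTop atTop :=
            tendsto_atTop_add_const_right _ 2 tendsto_natCast_atTop_atTop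
          have h3 : Tendsto (fun k : ℕ => 1 / ((k : ℝ) + 2)) atTop (nhds 0) := by
            simpa [one_div, Pi.inv_def] using h2.inv_tendsto_atTop
          have h4 : Tendsto (fun k : ℕ => R * (1 - 1 / ((k:ℝ) + 2))) atTop (nhds (R * (1 - 0))) :=
            (tendsto_const_nhds.sub h3).const_mul R
          simpa [hrk, one_div] using h4
        exact (h1.eventually_const_lt hx).exists
      · rintro ⟨k, hk⟩
        exact hk.trans (hrklt k)
    rw [hcover, (hmono.directed_le).measure_iUnion]
    apply iSup_le
    intro k
    rw [wde_ball hv' hfin (hrkpos k)]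
    exact ofReal_le_ofReal (hs _ (hrkpos k) (hrklt k))

lemma wde_sublevel (hn : 0 < n) (hv' : ∀ᵐ x ∂(volume : Measure (Rn n)), 0 < v x)
    (hfin : ∀ r : ℝ, 0 < r →
      IntegrableOn (fun y => v y ^ (-(p / (p - 1)))) {y : Rn n | ‖y‖ < r})
    {t s : ℝ} (ht : 0 < t) (hts : gfun n p v t < s) :
    wde n p v {x | gfun n p v ‖x‖ < s} ≤ ENNReal.ofReal s := by
  have gm := gfun_mono hv' hfin
  have hs0 : 0 ≤ s := (gfun_nonneg hv' t).trans hts.le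
  set S : Set ℝ := {r | gfun n p v r < s} with hS
  have htS : t ∈ S := hts
  by_cases hbdd : BddAbove S
  · set R := sSup S with hR
    have hsub : {x : Rn n | gfun n p v ‖x‖ < s} ⊆ {x | ‖x‖ < R} ∪ {x | ‖x‖ = R} := by
      intro x hx
      rcases lt_or_eq_of_le (le_csSup hbdd hx) with h | h
      · exact Or.inl h
      · exact Or.inr h
    calc wde n p v {x | gfun n p v ‖x‖ < s}
        ≤ wde n p v ({x | ‖x‖ < R} ∪ {x | ‖x‖ = R}) := measure_mono hsub
      _ ≤ wde n p v {x | ‖x‖ < R} + wde n p v {x | ‖x‖ = R} := measure_union_le _ _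
      _ = wde n p v {x | ‖x‖ < R} := by rw [wde_sphere hn, add_zero]
      _ ≤ ENNReal.ofReal s := by
          apply wde_ball_le hv' hfin hs0
          intro r _ hrR
          obtain ⟨r', hr'S, hrr'⟩ := exists_lt_of_lt_csSup ⟨t, htS⟩ hrR
          exact (gm hrr'.le).trans hr'S.le
  · have hall : ∀ r : ℝ, 0 < r → gfun n p v r ≤ s := by
      intro r _
      obtain ⟨r', hr'S, hrr'⟩ := (not_bddAbove_iff.mp hbdd) r
      exact (gm hrr'.le).trans hr'S.le
    have hmono : Monotone fun k : ℕ => {x : Rn n | ‖x‖ < (k : ℝ) + 1} := by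
      intro i j hij x hx
      have : (i : ℝ) + 1 ≤ (j : ℝ) + 1 := by
        have h5 : (i : ℝ) ≤ (j : ℝ) := Nat.cast_le.mpr hij; linarith
      exact lt_of_lt_of_le hx this
    have hcover : {x : Rn n | gfun n p v ‖x‖ < s} ⊆ ⋃ k : ℕ, {x : Rn n | ‖x‖ < (k : ℝ) + 1} := by
      intro x _
      simp only [mem_iUnion, mem_setOf_eq]
      obtain ⟨k, hk⟩ := exists_nat_gt ‖x‖
      exact ⟨k, by linarith⟩
    calc wde n p v {x | gfun n p v ‖x‖ < s}
        ≤ wde n p v (⋃ k : ℕ, {x : Rn n | ‖x‖ < (k : ℝ) + 1}) := measure_mono hcover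
      _ = ⨆ k : ℕ, wde n p v {x : Rn n | ‖x‖ < (k : ℝ) + 1} :=
          (hmono.directed_le).measure_iUnion
      _ ≤ ENNReal.ofReal s := by
          apply iSup_le
          intro k
          have hk1 : (0:ℝ) < (k:ℝ) + 1 := by positivity
          rw [wde_ball hv' hfin hk1]
          exact ofReal_le_ofReal (hall _ hk1)


lemma outer_bound (hn : 0 < n) (hv' : ∀ᵐ x ∂(volume : Measure (Rn n)), 0 < v x)
    (hfin : ∀ r : ℝ, 0 < r →
      IntegrableOn (fun y => v y ^ (-(p / (p - 1)))) {y : Rn n | ‖y‖ < r})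
    {t β : ℝ} (ht : 0 < t) (hβ : 0 < β) (hgt : 0 < gfun n p v t) :
    ∫⁻ x in {x : Rn n | ‖x‖ < t}ᶜ, ENNReal.ofReal (gfun n p v ‖x‖ ^ (-(β + 1)))
        ∂(wde n p v)
      ≤ ENNReal.ofReal (gfun n p v t ^ (-β) * (1 / β)) := by
  have gm := gfun_mono hv' hfin
  have gmeas : Measurable (gfun n p v) := gm.measurable
  set c := gfun n p v t with hc
  set γ := 1 / (β + 1) with hγ
  have hβ1 : (0:ℝ) < β + 1 := by linarith
  have hγ0 : 0 < γ := by positivity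
  have hγ1 : γ < 1 := by
    rw [hγ, div_lt_one hβ1]; linarith
  set T := c ^ (-(β + 1)) with hT
  have hT0 : 0 < T := Real.rpow_pos_of_pos hgt _
  set F : Rn n → ℝ := fun x => gfun n p v ‖x‖ ^ (-(β + 1)) with hF
  have hFmeas : Measurable F :=
    (gmeas.comp measurable_norm).pow measurable_const
  have hFnn : ∀ x, 0 ≤ F x := fun x => Real.rpow_nonneg (gfun_nonneg hv' _) _
  set A : Set (Rn n) := {x : Rn n | ‖x‖ < t}ᶜ with hA
  have hAmeas : MeasurableSet A := (ballMeas t).compl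
  rw [lintegral_eq_lintegral_meas_lt _ (ae_of_all _ hFnn) hFmeas.aemeasurable]
  -- bound the tail measure
  have key : ∀ s : ℝ, s ∈ Ioi (0:ℝ) →
      ((wde n p v).restrict A) {x | s < F x} ≤ ENNReal.ofReal (s ^ (-γ) - c) := by
    intro s hs
    have hs0 : (0:ℝ) < s := hs
    set u := s ^ (-γ) with hu
    have hu0 : 0 < u := Real.rpow_pos_of_pos hs0 _
    rw [Measure.restrict_apply (measurableSet_lt measurable_const hFmeas)]
    have huval : u ^ (-(β + 1)) = s := by
      rw [hu, ← Real.rpow_mul hs0.le]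
      have : -γ * -(β + 1) = 1 := by
        rw [neg_mul_neg, hγ, one_div, inv_mul_cancel₀ hβ1.ne']
      rw [this, Real.rpow_one]
    have hsub : {x : Rn n | s < F x} ∩ A ⊆ {x | gfun n p v ‖x‖ < u} ∩ A := by
      rintro x ⟨hx1, hx2⟩
      refine ⟨?_, hx2⟩
      have hxt : t ≤ ‖x‖ := not_lt.mp hx2
      have hg0 : 0 < gfun n p v ‖x‖ := lt_of_lt_of_le hgt (gm hxt)
      by_contra hcon
      have : gfun n p v ‖x‖ ^ (-(β + 1)) ≤ u ^ (-(β + 1)) :=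
        Real.rpow_le_rpow_of_nonpos hu0 (le_of_not_gt hcon) (by linarith)
      rw [huval] at this
      exact absurd (lt_of_lt_of_le hx1 this) (lt_irrefl s)
    by_cases hcu : u ≤ c
    · have hempty : {x : Rn n | gfun n p v ‖x‖ < u} ∩ A = ∅ := by
        ext x
        simp only [mem_inter_iff, mem_setOf_eq, mem_empty_iff_false, iff_false, not_and]
        intro hx1 hx2
        have hxt : t ≤ ‖x‖ := not_lt.mp hx2
        exact absurd (lt_of_le_of_lt (hcu.trans (gm hxt)) hx1) (lt_irrefl _)
      calc (wde n p v) ({x | s < F x} ∩ A)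
          ≤ (wde n p v) ({x : Rn n | gfun n p v ‖x‖ < u} ∩ A) := measure_mono hsub
        _ = 0 := by rw [hempty, measure_empty]
        _ ≤ _ := zero_le
    · push_neg at hcu
      have hkey := wde_sublevel hn hv' hfin ht hcu
      have hdisj : Disjoint ({x : Rn n | gfun n p v ‖x‖ < u} ∩ A) {x : Rn n | ‖x‖ < t} := by
        rw [disjoint_left]
        rintro x ⟨_, hx2⟩ hx3
        exact hx2 hx3
      have hunion : ({x : Rn n | gfun n p v ‖x‖ < u} ∩ A) ∪ {x : Rn n | ‖x‖ < t}
          ⊆ {x : Rn n | gfun n p v ‖x‖ < u} := by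
        rintro x (⟨hx1, _⟩ | hx1)
        · exact hx1
        · exact lt_of_le_of_lt (gm hx1.le) hcu
      have hum := measure_union (μ := wde n p v) hdisj (ballMeas t)
      have hle : (wde n p v) ({x : Rn n | gfun n p v ‖x‖ < u} ∩ A) + ENNReal.ofReal c
          ≤ ENNReal.ofReal u := by
        rw [← wde_ball hv' hfin ht, ← hum]
        exact le_trans (measure_mono hunion) hkey
      have h2 : (wde n p v) ({x : Rn n | gfun n p v ‖x‖ < u} ∩ A)
          ≤ ENNReal.ofReal u - ENNReal.ofReal c :=
        ENNReal.le_sub_of_add_le_right ofReal_ne_top hle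
      calc (wde n p v) ({x | s < F x} ∩ A)
          ≤ (wde n p v) ({x : Rn n | gfun n p v ‖x‖ < u} ∩ A) := measure_mono hsub
        _ ≤ ENNReal.ofReal u - ENNReal.ofReal c := h2
        _ = ENNReal.ofReal (u - c) := (ENNReal.ofReal_sub u hgt.le).symm
  -- c ≤ s^(-γ) for s ∈ Ioc 0 T, and s^(-γ) ≤ c for s ∈ Ioi T
  have hTγ : T ^ (-γ) = c := by
    rw [hT, ← Real.rpow_mul hgt.le]
    have h1 : -(β + 1) * -γ = 1 := by rw [hγ]; field_simp
    rw [h1, Real.rpow_one]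
  have hγneg : -γ ≤ 0 := by linarith
  have hpart2 : ∫⁻ s in Ioi T, ENNReal.ofReal (s ^ (-γ) - c) = 0 := by
    rw [setLIntegral_congr_fun measurableSet_Ioi
      (fun s (hs : s ∈ Ioi T) => ?_), lintegral_zero]
    have h1 : s ^ (-γ) ≤ T ^ (-γ) :=
      Real.rpow_le_rpow_of_nonpos hT0 (le_of_lt hs) hγneg
    rw [hTγ] at h1
    exact ENNReal.ofReal_eq_zero.mpr (by linarith)
  have hint1 : IntegrableOn (fun s : ℝ => s ^ (-γ)) (Ioc 0 T) := by
    have h1 := intervalIntegral.intervalIntegrable_rpow' (r := -γ) (a := 0) (b := T) (by linarith)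
    rwa [intervalIntegrable_iff, uIoc_of_le hT0.le] at h1
  have hintc : IntegrableOn (fun _ : ℝ => c) (Ioc 0 T) :=
    integrableOn_const measure_Ioc_lt_top.ne
  have hIocnn : ∀ᵐ s ∂(volume.restrict (Ioc 0 T)), 0 ≤ s ^ (-γ) - c := by
    filter_upwards [ae_restrict_mem measurableSet_Ioc] with s hs
    have h1 : T ^ (-γ) ≤ s ^ (-γ) :=
      Real.rpow_le_rpow_of_nonpos hs.1 hs.2 hγneg
    rw [hTγ] at h1
    linarith
  have hpart1 : ∫⁻ s in Ioc 0 T, ENNReal.ofReal (s ^ (-γ) - c)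
      = ENNReal.ofReal (∫ s in Ioc 0 T, (s ^ (-γ) - c)) :=
    (ofReal_integral_eq_lintegral_ofReal (hint1.sub hintc) hIocnn).symm
  have e1 : ∫ s in Ioc 0 T, s ^ (-γ) = T ^ (1 - γ) / (1 - γ) := by
    rw [← intervalIntegral.integral_of_le hT0.le,
      integral_rpow (Or.inl (by linarith : (-1:ℝ) < -γ)),
      Real.zero_rpow (by linarith : -γ + 1 ≠ 0)]
    have h2 : -γ + 1 = 1 - γ := by ring
    rw [h2, sub_zero]
  have e2 : ∫ _ in Ioc 0 T, (c:ℝ) = T * c := by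
    simp [Real.volume_Ioc, ENNReal.toReal_ofReal hT0.le, hT0.le]
  have hTpow : T ^ (1 - γ) = c ^ (-β) := by
    rw [hT, ← Real.rpow_mul hgt.le]
    congr 1
    rw [hγ]; field_simp; ring
  have hcT : T * c = c ^ (-β) := by
    have h1 : c ^ (-(β+1)) * c ^ (1:ℝ) = c ^ (-(β+1) + 1) := (Real.rpow_add hgt _ _).symm
    have h2 : -(β+1) + 1 = -β := by ring
    rw [hT]
    rw [Real.rpow_one] at h1
    rw [h1, h2]
  have hval : ∫ s in Ioc 0 T, (s ^ (-γ) - c) = c ^ (-β) * (1 / β) := by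
    rw [integral_sub hint1 hintc, e1, e2, hTpow, hcT]
    have h1γ : 1 - γ = β / (β + 1) := by rw [hγ]; field_simp; ring
    rw [h1γ]
    field_simp
    ring
  calc ∫⁻ s in Ioi (0:ℝ), ((wde n p v).restrict A) {x | s < F x}
      ≤ ∫⁻ s in Ioi (0:ℝ), ENNReal.ofReal (s ^ (-γ) - c) := by
        apply lintegral_mono_ae
        filter_upwards [ae_restrict_mem measurableSet_Ioi] with s hs
        exact key s hs
    _ = (∫⁻ s in Ioc 0 T, ENNReal.ofReal (s ^ (-γ) - c))
        + ∫⁻ s in Ioi T, ENNReal.ofReal (s ^ (-γ) - c) := by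
        rw [← Ioc_union_Ioi_eq_Ioi hT0.le]
        exact lintegral_union measurableSet_Ioi (Ioc_disjoint_Ioi (le_refl T))
    _ = ENNReal.ofReal (c ^ (-β) * (1 / β)) := by
        rw [hpart1, hpart2, hval, add_zero]

end TestAux

/-- Let `1 < p < ∞`, `α ∈ (0,1)`, `t > 0`, and let `v` be a weight on `ℝⁿ` with
`g(r) = ∫_{|y|<r} v^{-p'}` finite for every `r > 0` and `g(t) > 0`.  Then the test
function `f` above satisfies
`‖f‖_{L_{p,v}} = (∫ (f v)^p)^{1/p} ≤ ((p'/(1-α))^p + 1/(α(p-1)))^{1/p} g(t)^{-α/p'}`. -/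
theorem test_function_norm_bound (n : ℕ) (hn : 0 < n) (p : ℝ) (hp : 1 < p)
    (α : ℝ) (hα : α ∈ Ioo (0 : ℝ) 1) (t : ℝ) (ht : 0 < t)
    (v : Rn n → ℝ) (hv : Measurable v)
    (hv' : ∀ᵐ x ∂(volume : Measure (Rn n)), 0 < v x)
    (hfin : ∀ r : ℝ, 0 < r →
      IntegrableOn (fun y => v y ^ (-(p / (p - 1)))) {y : Rn n | ‖y‖ < r})
    (hgt : 0 < gfun n p v t) :
    (∫⁻ x, ENNReal.ofReal (|testFun n p α t v x| * v x) ^ p) ^ (1 / p)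
      ≤ ENNReal.ofReal
          ((((p / (p - 1) / (1 - α)) ^ p + 1 / (α * (p - 1))) ^ (1 / p)) *
            gfun n p v t ^ (-(α / (p / (p - 1))))) := by
  obtain ⟨hα0, hα1⟩ := hα
  have hp0 : (0:ℝ) < p := lt_trans one_pos hp
  have hp1 : (0:ℝ) < p - 1 := by linarith
  set q := p / (p - 1) with hq
  have hq0 : 0 < q := by positivity
  set β := α * (p - 1) with hβdef
  have hβ : 0 < β := by positivity
  set C := q / (1 - α) with hC
  have hC0 : 0 < C := div_pos hq0 (by linarith)
  set e := -(α / q) - 1 / p with he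
  have hep : e * p = -β - 1 := by
    rw [he, hq, hβdef]; field_simp
  set c := gfun n p v t with hc
  have gm := TestAux.gfun_mono hv' hfin
  have hqp : (1 - q) * p = -q := by rw [hq]; field_simp; ring
  set Φ : Rn n → ℝ≥0∞ := fun x => ENNReal.ofReal (|testFun n p α t v x| * v x) ^ p with hΦ
  have hsplit : ∫⁻ x, Φ x = (∫⁻ x in {x : Rn n | ‖x‖ < t}, Φ x)
      + ∫⁻ x in {x : Rn n | ‖x‖ < t}ᶜ, Φ x :=
    (lintegral_add_compl Φ (TestAux.ballMeas t)).symm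
  -- inner region
  have hcong_in : ∀ᵐ x ∂((volume : Measure (Rn n)).restrict {x : Rn n | ‖x‖ < t}),
      Φ x = ENNReal.ofReal (C ^ p * c ^ (e * p)) * ENNReal.ofReal (v x ^ (-q)) := by
    filter_upwards [ae_restrict_mem (TestAux.ballMeas t), ae_restrict_of_ae hv'] with x hxs hxv
    have hxs' : ‖x‖ < t := hxs
    have h1 : 0 < c ^ e := Real.rpow_pos_of_pos hgt e
    have h2 : 0 < v x ^ (-q) := Real.rpow_pos_of_pos hxv _
    have hfx : testFun n p α t v x = C * c ^ e * v x ^ (-q) := by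
      simp only [testFun, if_pos hxs']; rfl
    have habs : |testFun n p α t v x| = C * c ^ e * v x ^ (-q) := by
      rw [hfx]; exact abs_of_pos (by positivity)
    have hmul : v x ^ (-q) * v x = v x ^ (1 - q) := by
      calc v x ^ (-q) * v x = v x ^ (-q) * v x ^ (1:ℝ) := by rw [Real.rpow_one]
        _ = v x ^ (-q + 1) := (Real.rpow_add hxv _ _).symm
        _ = v x ^ (1 - q) := by ring_nf
    have hz : (C * c ^ e * v x ^ (1 - q)) ^ p = C ^ p * c ^ (e * p) * v x ^ (-q) := by
      rw [Real.mul_rpow (by positivity) (by positivity),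
        Real.mul_rpow hC0.le (by positivity),
        ← Real.rpow_mul hgt.le, ← Real.rpow_mul hxv.le, hqp]
    simp only [hΦ]
    rw [habs, mul_assoc, hmul, ENNReal.ofReal_rpow_of_pos (by positivity), hz,
      ENNReal.ofReal_mul (by positivity)]
  have hvq_meas : Measurable fun x : Rn n => ENNReal.ofReal (v x ^ (-q)) :=
    (hv.pow measurable_const).ennreal_ofReal
  have hinner : ∫⁻ x in {x : Rn n | ‖x‖ < t}, Φ x = ENNReal.ofReal (C ^ p * c ^ (-β)) := by
    rw [lintegral_congr_ae hcong_in, lintegral_const_mul _ hvq_meas]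
    have h3 : ∫⁻ x in {x : Rn n | ‖x‖ < t}, ENNReal.ofReal (v x ^ (-q))
        = ENNReal.ofReal c := by
      rw [← TestAux.wde_ball hv' hfin ht, TestAux.wde,
        withDensity_apply _ (TestAux.ballMeas t)]
    rw [h3, ← ENNReal.ofReal_mul (by positivity)]
    congr 1
    rw [mul_assoc]
    congr 1
    calc c ^ (e * p) * c = c ^ (e * p) * c ^ (1:ℝ) := by rw [Real.rpow_one]
      _ = c ^ (e * p + 1) := (Real.rpow_add hgt _ _).symm
      _ = c ^ (-β) := by
          have h4 : e * p + 1 = -β := by rw [hep]; ring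
          rw [h4]
  -- outer region
  have hcong_out : ∀ᵐ x ∂((volume : Measure (Rn n)).restrict {x : Rn n | ‖x‖ < t}ᶜ),
      Φ x = ENNReal.ofReal (gfun n p v ‖x‖ ^ (-(β + 1))) * ENNReal.ofReal (v x ^ (-q)) := by
    filter_upwards [ae_restrict_mem (TestAux.ballMeas t).compl, ae_restrict_of_ae hv']
      with x hxs hxv
    have hxt : ¬ ‖x‖ < t := hxs
    have hg0 : 0 < gfun n p v ‖x‖ := lt_of_lt_of_le hgt (gm (not_lt.mp hxt))
    have h1 : 0 < gfun n p v ‖x‖ ^ e := Real.rpow_pos_of_pos hg0 e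
    have h2 : 0 < v x ^ (-q) := Real.rpow_pos_of_pos hxv _
    have hfx : testFun n p α t v x = gfun n p v ‖x‖ ^ e * v x ^ (-q) := by
      simp only [testFun, if_neg hxt]; rfl
    have habs : |testFun n p α t v x| = gfun n p v ‖x‖ ^ e * v x ^ (-q) := by
      rw [hfx]; exact abs_of_pos (by positivity)
    have hmul : v x ^ (-q) * v x = v x ^ (1 - q) := by
      calc v x ^ (-q) * v x = v x ^ (-q) * v x ^ (1:ℝ) := by rw [Real.rpow_one]
        _ = v x ^ (-q + 1) := (Real.rpow_add hxv _ _).symm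
        _ = v x ^ (1 - q) := by ring_nf
    have hz : (gfun n p v ‖x‖ ^ e * v x ^ (1 - q)) ^ p
        = gfun n p v ‖x‖ ^ (-(β + 1)) * v x ^ (-q) := by
      rw [Real.mul_rpow (by positivity) (by positivity),
        ← Real.rpow_mul hg0.le, ← Real.rpow_mul hxv.le, hqp]
      have h4 : e * p = -(β + 1) := by rw [hep]; ring
      rw [h4]
    simp only [hΦ]
    rw [habs, mul_assoc, hmul, ENNReal.ofReal_rpow_of_pos (by positivity), hz,
      ENNReal.ofReal_mul (by positivity)]
  have houter : ∫⁻ x in {x : Rn n | ‖x‖ < t}ᶜ, Φ x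
      ≤ ENNReal.ofReal (c ^ (-β) * (1 / β)) := by
    rw [lintegral_congr_ae hcong_out]
    have hstep : ∫⁻ x in {x : Rn n | ‖x‖ < t}ᶜ,
        ENNReal.ofReal (gfun n p v ‖x‖ ^ (-(β + 1))) * ENNReal.ofReal (v x ^ (-q))
        = ∫⁻ x in {x : Rn n | ‖x‖ < t}ᶜ,
            ENNReal.ofReal (gfun n p v ‖x‖ ^ (-(β + 1))) ∂(TestAux.wde n p v) := by
      have hGmeas : Measurable fun x : Rn n =>
          ENNReal.ofReal (gfun n p v ‖x‖ ^ (-(β + 1))) :=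
        (((gm.measurable).comp measurable_norm).pow measurable_const).ennreal_ofReal
      rw [TestAux.wde, restrict_withDensity (TestAux.ballMeas t).compl]
      simp only [← hq]
      rw [lintegral_withDensity_eq_lintegral_mul _ hvq_meas hGmeas]
      apply lintegral_congr
      intro x
      exact mul_comm _ _
    rw [hstep]
    exact TestAux.outer_bound hn hv' hfin ht hβ hgt
  -- combine
  have htotal : ∫⁻ x, Φ x ≤ ENNReal.ofReal ((C ^ p + 1 / β) * c ^ (-β)) := by
    rw [hsplit, hinner]
    calc ENNReal.ofReal (C ^ p * c ^ (-β)) + ∫⁻ x in {x : Rn n | ‖x‖ < t}ᶜ, Φ x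
        ≤ ENNReal.ofReal (C ^ p * c ^ (-β)) + ENNReal.ofReal (c ^ (-β) * (1 / β)) :=
          add_le_add le_rfl houter
      _ = ENNReal.ofReal ((C ^ p + 1 / β) * c ^ (-β)) := by
          rw [← ENNReal.ofReal_add (by positivity) (by positivity)]
          congr 1
          ring
  calc (∫⁻ x, Φ x) ^ (1 / p)
      ≤ (ENNReal.ofReal ((C ^ p + 1 / β) * c ^ (-β))) ^ (1 / p) :=
        ENNReal.rpow_le_rpow htotal (by positivity)
    _ = ENNReal.ofReal (((C ^ p + 1 / β) * c ^ (-β)) ^ (1 / p)) :=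
        ENNReal.ofReal_rpow_of_pos (by positivity)
    _ = ENNReal.ofReal ((C ^ p + 1 / β) ^ (1 / p) * c ^ (-(α / q))) := by
        congr 1
        rw [Real.mul_rpow (by positivity) (by positivity), ← Real.rpow_mul hgt.le]
        congr 1
        rw [hβdef, hq]
        field_simp
end
end

section
/- Let 1 < p < ∞, α ∈ (0,1), t > 0, and let v be a weight on ℝⁿ with g(r) := ∫_{|y|<r} v(y)^{−p'} dy finite for every r > 0. Define f(x) := (p'/(1−α)) · g(t)^{−α/p' − 1/p} · v(x)^{−p'} for |x| < t, and f(x) := g(|x|)^{−α/p' − 1/p} · v(x)^{−p'} for |x| > t. Then for every x with |x| > t, the Hardy operator satisfies Hf(x) ≥ (p'/(1−α)) · g(|x|)^{(1−α)/p'}. -/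
open MeasureTheory Set ENNReal

noncomputable section

/-- The multidimensional Hardy operator `Hf(x) = ∫_{|y|<|x|} f(y) dy`. -/
def hardy (n : ℕ) (f : Rn n → ℝ) (x : Rn n) : ℝ :=
  ∫ y in {y : Rn n | ‖y‖ < ‖x‖}, f y

/-- local: integral of `w` over the ball of radius `r`. -/
private def Gb (n : ℕ) (w : Rn n → ℝ) (r : ℝ) : ℝ :=
  ∫ y in {y : Rn n | ‖y‖ < r}, w y

private lemma measurableSet_ballSet {n : ℕ} (r : ℝ) :
    MeasurableSet {y : Rn n | ‖y‖ < r} := by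
  have : {y : Rn n | ‖y‖ < r} = Metric.ball (0 : Rn n) r := by
    ext y; simp [Metric.mem_ball, dist_zero_right]
  rw [this]; exact Metric.isOpen_ball.measurableSet

private lemma ballSet_mono {n : ℕ} {r s : ℝ} (h : r ≤ s) :
    {y : Rn n | ‖y‖ < r} ⊆ {y : Rn n | ‖y‖ < s} :=
  fun _ hy => lt_of_lt_of_le hy h

variable {n : ℕ} {w : Rn n → ℝ}

private lemma Gb_mono (hw0 : ∀ᵐ y ∂(volume : Measure (Rn n)), 0 ≤ w y)
    (hfin : ∀ r : ℝ, 0 < r → IntegrableOn w {y : Rn n | ‖y‖ < r}) :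
    Monotone (Gb n w) := by
  intro r s hrs
  rcases le_or_gt s 0 with hs | hs
  · have h1 : {y : Rn n | ‖y‖ < r} = (∅ : Set (Rn n)) :=
      eq_empty_of_forall_notMem fun y hy =>
        absurd (lt_of_lt_of_le (lt_of_le_of_lt (norm_nonneg y) hy) (hrs.trans hs)) (lt_irrefl 0)
    have h2 : {y : Rn n | ‖y‖ < s} = (∅ : Set (Rn n)) :=
      eq_empty_of_forall_notMem fun y hy =>
        absurd (lt_of_lt_of_le (lt_of_le_of_lt (norm_nonneg y) hy) hs) (lt_irrefl 0)
    simp [Gb, h1, h2]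
  · exact setIntegral_mono_set (hfin s hs) (ae_restrict_of_ae hw0)
      ((ballSet_mono hrs).eventuallyLE)

private lemma Gb_nonneg (hw0 : ∀ᵐ y ∂(volume : Measure (Rn n)), 0 ≤ w y) (r : ℝ) :
    0 ≤ Gb n w r :=
  setIntegral_nonneg_of_ae_restrict (ae_restrict_of_ae hw0)

private lemma Gb_pos (hw0 : ∀ᵐ y ∂(volume : Measure (Rn n)), 0 < w y)
    (hfin : ∀ r : ℝ, 0 < r → IntegrableOn w {y : Rn n | ‖y‖ < r})
    {r : ℝ} (hr : 0 < r) : 0 < Gb n w r := by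
  rw [Gb]
  refine (setIntegral_pos_iff_support_of_nonneg_ae
    (ae_restrict_of_ae (hw0.mono fun y hy => hy.le)) (hfin r hr)).2 ?_
  have hnull : (volume : Measure (Rn n)) {y | ¬ 0 < w y} = 0 := hw0
  have hdiff : (volume : Measure (Rn n)) ({y : Rn n | ‖y‖ < r} \ Function.support w) = 0 :=
    measure_mono_null (fun y hy => by
      simp only [mem_setOf_eq]
      intro hwy
      exact hy.2 (by simpa [Function.mem_support] using ne_of_gt hwy)) hnull
  have hball : {y : Rn n | ‖y‖ < r} = Metric.ball (0 : Rn n) r := by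
    ext y; simp [Metric.mem_ball, dist_zero_right]
  have h1 : (volume : Measure (Rn n)) (Function.support w ∩ {y : Rn n | ‖y‖ < r})
      = volume {y : Rn n | ‖y‖ < r} := by
    rw [inter_comm, ← Set.diff_diff_right_self, measure_diff_null hdiff]
  rw [h1, hball]
  exact Metric.measure_ball_pos _ _ hr
private lemma Gb_sub_eq (hfin : ∀ r : ℝ, 0 < r → IntegrableOn w {y : Rn n | ‖y‖ < r})
    {a b : ℝ} (hb : 0 < b) (hab : a ≤ b) :
    ∫ y in {y : Rn n | ‖y‖ < b} \ {y : Rn n | ‖y‖ < a}, w y = Gb n w b - Gb n w a := by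
  rw [integral_diff (measurableSet_ballSet a) (hfin b hb) (ballSet_mono hab)]; rfl

private lemma Gb_cont
    (hw0 : ∀ᵐ y ∂(volume : Measure (Rn n)), 0 ≤ w y)
    (hfin : ∀ r : ℝ, 0 < r → IntegrableOn w {y : Rn n | ‖y‖ < r})
    {r₀ : ℝ} (hr₀ : 0 < r₀) : ContinuousAt (Gb n w) r₀ := by
  have hmono := Gb_mono hw0 hfin
  rw [Metric.continuousAt_iff]
  intro ε hε
  set s : ℕ → Set (Rn n) :=
    fun j => {y | ‖y‖ < r₀ + 1/(j+1)} \ {y | ‖y‖ < r₀ - 1/(j+1)} with hs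
  have hmeas : ∀ j, MeasurableSet (s j) :=
    fun j => (measurableSet_ballSet _).diff (measurableSet_ballSet _)
  have hanti : Antitone s := by
    intro i j hij
    have h1 : (1:ℝ)/(j+1) ≤ 1/(i+1) := by
      apply one_div_le_one_div_of_le (by positivity)
      have := (Nat.cast_le (α := ℝ)).2 hij; linarith
    exact diff_subset_diff (ballSet_mono (by linarith)) (ballSet_mono (by linarith))
  have hinter : ⋂ j, s j = Metric.sphere (0 : Rn n) r₀ := by
    ext y
    simp only [mem_iInter, hs, mem_diff, mem_setOf_eq, not_lt, Metric.mem_sphere,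
      dist_zero_right]
    constructor
    · intro h
      have h1 : ‖y‖ ≤ r₀ := by
        by_contra hc
        push_neg at hc
        obtain ⟨j, hj⟩ := exists_nat_one_div_lt (show 0 < ‖y‖ - r₀ by linarith)
        have := (h j).1
        linarith [hj]
      have h2 : r₀ ≤ ‖y‖ := by
        by_contra hc
        push_neg at hc
        obtain ⟨j, hj⟩ := exists_nat_one_div_lt (show 0 < r₀ - ‖y‖ by linarith)
        have := (h j).2
        linarith [hj]
      linarith
    · intro h
      refine fun j => ⟨?_, ?_⟩ <;> rw [h] <;> [skip; skip] <;>
        have : (0:ℝ) < 1/(j+1) := by positivity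
      · linarith
      · linarith
  have hlim := tendsto_setIntegral_of_antitone (μ := volume) (f := w) hmeas hanti
    ⟨0, ((hfin (r₀ + 1) (by linarith)).mono_set
      (diff_subset.trans (ballSet_mono (by norm_num))))⟩
  rw [hinter] at hlim
  have hsph : (volume : Measure (Rn n)) (Metric.sphere 0 r₀) = 0 :=
    Measure.addHaar_sphere_of_ne_zero _ _ hr₀.ne'
  have hzero : ∫ y in Metric.sphere (0 : Rn n) r₀, w y = 0 := by
    rw [Measure.restrict_eq_zero.mpr hsph, integral_zero_measure]
  rw [hzero] at hlim
  obtain ⟨j, hj⟩ := (hlim.eventually (gt_mem_nhds hε)).exists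
  have h0 : (0:ℝ) < 1/(j+1) := by positivity
  refine ⟨1/(j+1), by positivity, fun {r} hr => ?_⟩
  rw [Real.dist_eq] at hr ⊢
  have hkey : Gb n w (r₀ + 1/(j+1)) - Gb n w (r₀ - 1/(j+1)) < ε := by
    rw [← Gb_sub_eq hfin (by positivity) (by linarith)]
    exact hj
  have h1 : Gb n w r ≤ Gb n w (r₀ + 1/(j+1)) := hmono (by cases abs_sub_lt_iff.1 hr; linarith)
  have h2 : Gb n w (r₀ - 1/(j+1)) ≤ Gb n w r := hmono (by cases abs_sub_lt_iff.1 hr; linarith)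
  have h3 : Gb n w r₀ ≤ Gb n w (r₀ + 1/(j+1)) := hmono (by linarith)
  have h4 : Gb n w (r₀ - 1/(j+1)) ≤ Gb n w r₀ := hmono (by linarith)
  rw [abs_sub_lt_iff]
  constructor <;> linarith

private lemma bern_aux {γ : ℝ} (hγ0 : 0 < γ) (hγ1 : γ ≤ 1) {c d : ℝ} (hc : 0 < c)
    (hcd : c ≤ d) : d ^ γ - c ^ γ ≤ γ * c ^ (γ - 1) * (d - c) := by
  have hd : 0 < d := hc.trans_le hcd
  have hs : (0:ℝ) ≤ d / c - 1 := by
    rw [le_sub_iff_add_le, zero_add, le_div_iff₀ hc]; linarith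
  have h1 : (1 + (d/c - 1)) ^ γ ≤ 1 + γ * (d/c - 1) :=
    rpow_one_add_le_one_add_mul_self (by linarith) hγ0.le hγ1
  have h2 : (1 : ℝ) + (d/c - 1) = d / c := by ring
  rw [h2, Real.div_rpow hd.le hc.le] at h1
  have hcγ : 0 < c ^ γ := Real.rpow_pos_of_pos hc γ
  have h4 : d ^ γ ≤ c ^ γ * (1 + γ * (d/c - 1)) := by
    have := mul_le_mul_of_nonneg_right h1 hcγ.le
    rw [div_mul_cancel₀ _ hcγ.ne'] at this
    linarith [this]
  have h5 : c ^ (γ-1) = c ^ γ / c := by rw [Real.rpow_sub hc, Real.rpow_one]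
  rw [h5]
  have h6 : γ * (c ^ γ / c) * (d - c) = c ^ γ * (γ * (d/c - 1)) := by
    field_simp
  linarith [h4, h6.ge, h6.le]

private lemma shell_integrable (hw : Measurable w)
    (hw0 : ∀ᵐ y ∂(volume : Measure (Rn n)), 0 < w y)
    (hfin : ∀ r : ℝ, 0 < r → IntegrableOn w {y : Rn n | ‖y‖ < r})
    {γ t R : ℝ} (hγ1 : γ ≤ 1) (ht : 0 < t) (htR : t ≤ R) :
    IntegrableOn (fun y => Gb n w ‖y‖ ^ (γ - 1) * w y)
      ({y : Rn n | ‖y‖ < R} \ {y : Rn n | ‖y‖ < t}) := by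
  have hw0' : ∀ᵐ y ∂(volume : Measure (Rn n)), 0 ≤ w y := hw0.mono fun y hy => hy.le
  have hR : 0 < R := ht.trans_le htR
  have hmono := Gb_mono hw0' hfin
  have ha : 0 < Gb n w t := Gb_pos hw0 hfin ht
  have hGmeas : Measurable (Gb n w) := hmono.measurable
  have hmeasf : Measurable fun y : Rn n => Gb n w ‖y‖ ^ (γ - 1) * w y := by
    have h1 : Measurable fun y : Rn n => Gb n w ‖y‖ := hGmeas.comp measurable_norm
    fun_prop
  have hset : MeasurableSet ({y : Rn n | ‖y‖ < R} \ {y : Rn n | ‖y‖ < t}) :=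
    (measurableSet_ballSet R).diff (measurableSet_ballSet t)
  refine Integrable.mono (((hfin R hR).mono_set diff_subset).const_mul
    (Gb n w t ^ (γ - 1))) hmeasf.aestronglyMeasurable ?_
  filter_upwards [ae_restrict_mem hset, ae_restrict_of_ae hw0] with y hy hwy
  have hGy : Gb n w t ≤ Gb n w ‖y‖ := hmono (not_lt.1 hy.2)
  have hGypos : 0 < Gb n w ‖y‖ := lt_of_lt_of_le ha hGy
  have hle : Gb n w ‖y‖ ^ (γ - 1) ≤ Gb n w t ^ (γ - 1) :=
    Real.rpow_le_rpow_of_nonpos ha hGy (by linarith)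
  rw [Real.norm_eq_abs, Real.norm_eq_abs,
    abs_of_nonneg (mul_nonneg (Real.rpow_nonneg hGypos.le _) hwy.le),
    abs_of_nonneg (mul_nonneg (Real.rpow_pos_of_pos ha (γ-1)).le hwy.le)]
  exact mul_le_mul_of_nonneg_right hle hwy.le

open Filter Topology in
private lemma shell_bound (hw : Measurable w)
    (hw0 : ∀ᵐ y ∂(volume : Measure (Rn n)), 0 < w y)
    (hfin : ∀ r : ℝ, 0 < r → IntegrableOn w {y : Rn n | ‖y‖ < r})
    {γ t R : ℝ} (hγ0 : 0 < γ) (hγ1 : γ ≤ 1) (ht : 0 < t) (htR : t ≤ R) :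
    (1/γ) * (Gb n w R ^ γ - Gb n w t ^ γ)
      ≤ ∫ y in {y : Rn n | ‖y‖ < R} \ {y : Rn n | ‖y‖ < t},
          Gb n w ‖y‖ ^ (γ - 1) * w y := by
  have hw0' : ∀ᵐ y ∂(volume : Measure (Rn n)), 0 ≤ w y := hw0.mono fun y hy => hy.le
  have hR : 0 < R := ht.trans_le htR
  have hmono := Gb_mono hw0' hfin
  set a := Gb n w t with hadef
  set b := Gb n w R with hbdef
  have ha : 0 < a := Gb_pos hw0 hfin ht
  have hab : a ≤ b := hmono htR
  have hb : 0 < b := ha.trans_le hab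
  set I := ∫ y in {y : Rn n | ‖y‖ < R} \ {y : Rn n | ‖y‖ < t},
      Gb n w ‖y‖ ^ (γ - 1) * w y with hIdef
  have hInt := shell_integrable hw hw0 hfin hγ1 ht htR
  have hnn : ∀ᵐ y ∂(volume : Measure (Rn n)), 0 ≤ Gb n w ‖y‖ ^ (γ - 1) * w y :=
    hw0'.mono fun y hy => mul_nonneg (Real.rpow_nonneg (Gb_nonneg hw0' _) _) hy
  have hI0 : 0 ≤ I := setIntegral_nonneg_of_ae_restrict (ae_restrict_of_ae hnn)
  rcases eq_or_lt_of_le hab with heq | hab'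
  · rw [← heq]; simpa using hI0
  have hcont : ContinuousOn (Gb n w) (Icc t R) := fun r hr =>
    (Gb_cont hw0' hfin (ht.trans_le hr.1)).continuousWithinAt
  have hIVT : Icc (Gb n w t) (Gb n w R) ⊆ Gb n w '' Icc t R :=
    intermediate_value_Icc htR hcont
  have key : ∀ N : ℕ, 0 < N →
      (1/γ) * (b ^ γ - a ^ γ) - (a ^ (γ-1) - b ^ (γ-1)) * ((b - a)/N) ≤ I := by
    intro N hN
    have hNR : (0:ℝ) < N := Nat.cast_pos.2 hN
    have hN0 : (N:ℝ) ≠ 0 := hNR.ne'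
    set Δ := (b - a)/N with hΔdef
    have hΔ : 0 < Δ := div_pos (by linarith) hNR
    set u : ℕ → ℝ := fun k => a + k * Δ with hudef
    have hu0 : u 0 = a := by simp [hudef]
    have huN : u N = b := by
      show a + (N:ℝ) * Δ = b
      rw [hΔdef, mul_div_cancel₀ _ hN0]; ring
    have humono : ∀ ⦃j k : ℕ⦄, j < k → u j < u k := by
      intro j k hjk
      simp only [hudef]
      have h1 : (j:ℝ) < k := Nat.cast_lt.2 hjk
      have := mul_lt_mul_of_pos_right h1 hΔ
      linarith
    have hua : ∀ k : ℕ, a ≤ u k := fun k => by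
      simp only [hudef]
      have : (0:ℝ) ≤ (k:ℝ) * Δ := mul_nonneg (Nat.cast_nonneg k) hΔ.le
      linarith
    have hub : ∀ k : ℕ, k ≤ N → u k ≤ b := by
      intro k hk
      simp only [hudef]
      have h1 : (k:ℝ) ≤ N := Nat.cast_le.2 hk
      have h2 : (k:ℝ)*Δ ≤ N*Δ := mul_le_mul_of_nonneg_right h1 hΔ.le
      have hNΔ : (N:ℝ)*Δ = b - a := by rw [hΔdef]; field_simp
      linarith
    have hupos : ∀ k : ℕ, 0 < u k := fun k => lt_of_lt_of_le ha (hua k)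
    have hex : ∀ k : ℕ, ∃ ρ, ρ ∈ Icc t R ∧ Gb n w ρ = u (min k N) := by
      intro k
      obtain ⟨ρ, hρ1, hρ2⟩ := hIVT ⟨hua _, hub _ (min_le_right k N)⟩
      exact ⟨ρ, hρ1, hρ2⟩
    choose r hr1 hr2 using hex
    have hrt : ∀ k, t ≤ r k := fun k => (hr1 k).1
    have hrR : ∀ k, r k ≤ R := fun k => (hr1 k).2
    have hrpos : ∀ k, 0 < r k := fun k => lt_of_lt_of_le ht (hrt k)
    have hGr : ∀ k, k ≤ N → Gb n w (r k) = u k := fun k hk => by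
      rw [hr2 k, min_eq_left hk]
    have hrord : ∀ ⦃j k : ℕ⦄, j ≤ k → k ≤ N → r j ≤ r k := by
      intro j k hjk hkN
      rcases eq_or_lt_of_le hjk with rfl | hlt
      · exact le_refl _
      by_contra hc
      push_neg at hc
      have h1 : Gb n w (r k) ≤ Gb n w (r j) := hmono hc.le
      rw [hGr j (hlt.le.trans hkN), hGr k hkN] at h1
      exact absurd h1 (not_le.2 (humono hlt))
    have hstep : ∀ k : ℕ, k < N →
        u (k+1) ^ (γ-1) * Δ ≤
          ∫ y in {y : Rn n | ‖y‖ < r (k+1)} \ {y : Rn n | ‖y‖ < r k},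
            Gb n w ‖y‖ ^ (γ - 1) * w y := by
      intro k hk
      have hk1 : k + 1 ≤ N := hk
      have hsetm : MeasurableSet ({y : Rn n | ‖y‖ < r (k+1)} \ {y : Rn n | ‖y‖ < r k}) :=
        (measurableSet_ballSet _).diff (measurableSet_ballSet _)
      have hmass : ∫ y in {y : Rn n | ‖y‖ < r (k+1)} \ {y : Rn n | ‖y‖ < r k}, w y = Δ := by
        rw [Gb_sub_eq hfin (hrpos (k+1)) (hrord (Nat.le_succ k) hk1),
          hGr _ hk1, hGr _ (Nat.le_of_lt hk)]
        simp only [hudef]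
        push_cast; ring
      have hint1 : IntegrableOn (fun y => u (k+1) ^ (γ-1) * w y)
          ({y : Rn n | ‖y‖ < r (k+1)} \ {y : Rn n | ‖y‖ < r k}) :=
        ((hfin (r (k+1)) (hrpos _)).mono_set diff_subset).const_mul _
      have hint2 : IntegrableOn (fun y => Gb n w ‖y‖ ^ (γ - 1) * w y)
          ({y : Rn n | ‖y‖ < r (k+1)} \ {y : Rn n | ‖y‖ < r k}) :=
        hInt.mono_set (diff_subset_diff (ballSet_mono (hrR _)) (ballSet_mono (hrt _)))
      calc u (k+1) ^ (γ-1) * Δ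
          = ∫ y in {y : Rn n | ‖y‖ < r (k+1)} \ {y : Rn n | ‖y‖ < r k},
              u (k+1) ^ (γ-1) * w y := by
            rw [integral_const_mul, hmass]
        _ ≤ _ := by
            refine setIntegral_mono_ae_restrict hint1 hint2 ?_
            filter_upwards [ae_restrict_mem hsetm, ae_restrict_of_ae hw0] with y hy hwy
            have h1 : Gb n w ‖y‖ ≤ u (k+1) := by
              rw [← hGr _ hk1]; exact hmono (le_of_lt hy.1)
            have h2 : a ≤ Gb n w ‖y‖ := hmono ((hrt k).trans (not_lt.1 hy.2))
            exact mul_le_mul_of_nonneg_right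
              (Real.rpow_le_rpow_of_nonpos (lt_of_lt_of_le ha h2) h1 (by linarith)) hwy.le
    have hsum : ∀ m : ℕ, m ≤ N →
        ∑ k ∈ Finset.range m, u (k+1) ^ (γ-1) * Δ ≤
          ∫ y in {y : Rn n | ‖y‖ < r m} \ {y : Rn n | ‖y‖ < r 0},
            Gb n w ‖y‖ ^ (γ - 1) * w y := by
      intro m
      induction m with
      | zero => intro _; simp
      | succ m ih =>
        intro hm1
        have hm : m ≤ N := (Nat.le_succ m).trans hm1
        have hsub1 : {y : Rn n | ‖y‖ < r m} ⊆ {y : Rn n | ‖y‖ < r (m+1)} :=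
          ballSet_mono (hrord (Nat.le_succ m) hm1)
        have hsub0 : {y : Rn n | ‖y‖ < r 0} ⊆ {y : Rn n | ‖y‖ < r m} :=
          ballSet_mono (hrord (Nat.zero_le m) hm)
        have hid : ({y : Rn n | ‖y‖ < r (m+1)} \ {y : Rn n | ‖y‖ < r m}) ∪
            ({y : Rn n | ‖y‖ < r m} \ {y : Rn n | ‖y‖ < r 0}) =
            {y : Rn n | ‖y‖ < r (m+1)} \ {y : Rn n | ‖y‖ < r 0} :=
          diff_union_diff_cancel hsub1 hsub0
        have hdisj : Disjoint ({y : Rn n | ‖y‖ < r (m+1)} \ {y : Rn n | ‖y‖ < r m})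
            ({y : Rn n | ‖y‖ < r m} \ {y : Rn n | ‖y‖ < r 0}) :=
          disjoint_sdiff_self_left.mono_right diff_subset
        have hint3 : IntegrableOn (fun y => Gb n w ‖y‖ ^ (γ - 1) * w y)
            ({y : Rn n | ‖y‖ < r (m+1)} \ {y : Rn n | ‖y‖ < r m}) :=
          hInt.mono_set (diff_subset_diff (ballSet_mono (hrR _)) (ballSet_mono (hrt _)))
        have hint4 : IntegrableOn (fun y => Gb n w ‖y‖ ^ (γ - 1) * w y)
            ({y : Rn n | ‖y‖ < r m} \ {y : Rn n | ‖y‖ < r 0}) :=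
          hInt.mono_set (diff_subset_diff (ballSet_mono (hrR _)) (ballSet_mono (hrt _)))
        rw [← hid, setIntegral_union hdisj
          ((measurableSet_ballSet _).diff (measurableSet_ballSet _)) hint3 hint4,
          Finset.sum_range_succ]
        have h5 := hstep m hm1
        have h6 := ih hm
        linarith
    have hfinal : ∑ k ∈ Finset.range N, u (k+1) ^ (γ-1) * Δ ≤ I := by
      refine (hsum N le_rfl).trans ?_
      rw [hIdef]
      exact setIntegral_mono_set hInt (ae_restrict_of_ae hnn)
        ((diff_subset_diff (ballSet_mono (hrR N)) (ballSet_mono (hrt 0))).eventuallyLE)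
    have hlower : ∀ k ∈ Finset.range N,
        (1/γ) * (u (k+1) ^ γ - u k ^ γ) - (u k ^ (γ-1) - u (k+1) ^ (γ-1)) * Δ
          ≤ u (k+1) ^ (γ-1) * Δ := by
      intro k _
      have hb1 := bern_aux hγ0 hγ1 (hupos k) (humono (Nat.lt_succ_self k)).le
      have hdc : u (k+1) - u k = Δ := by simp only [hudef]; push_cast; ring
      rw [hdc] at hb1
      have h3 : (1/γ) * (γ * u k ^ (γ-1) * Δ) = u k ^ (γ-1) * Δ := by
        field_simp
      have h4 := mul_le_mul_of_nonneg_left hb1 (one_div_pos.2 hγ0).le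
      linarith
    have t1 : ∑ k ∈ Finset.range N, (u (k+1) ^ γ - u k ^ γ) = b ^ γ - a ^ γ := by
      rw [Finset.sum_range_sub (fun k => u k ^ γ), hu0, huN]
    have t2 : ∑ k ∈ Finset.range N, (u k ^ (γ-1) - u (k+1) ^ (γ-1))
        = a ^ (γ-1) - b ^ (γ-1) := by
      rw [Finset.sum_range_sub' (fun k => u k ^ (γ-1)), hu0, huN]
    calc (1/γ) * (b ^ γ - a ^ γ) - (a ^ (γ-1) - b ^ (γ-1)) * ((b - a)/N)
        = ∑ k ∈ Finset.range N,
            ((1/γ) * (u (k+1) ^ γ - u k ^ γ) - (u k ^ (γ-1) - u (k+1) ^ (γ-1)) * Δ) := by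
          rw [Finset.sum_sub_distrib, ← Finset.mul_sum, ← Finset.sum_mul, t1, t2, hΔdef]
      _ ≤ ∑ k ∈ Finset.range N, u (k+1) ^ (γ-1) * Δ := Finset.sum_le_sum hlower
      _ ≤ I := hfinal
  have hTend : Tendsto
      (fun N : ℕ => (1/γ) * (b ^ γ - a ^ γ) - (a ^ (γ-1) - b ^ (γ-1)) * ((b - a)/N))
      atTop (𝓝 ((1/γ) * (b ^ γ - a ^ γ) - (a ^ (γ-1) - b ^ (γ-1)) * 0)) :=
    tendsto_const_nhds.sub
      (tendsto_const_nhds.mul (tendsto_const_div_atTop_nhds_zero_nat (b - a)))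
  rw [mul_zero, sub_zero] at hTend
  refine le_of_tendsto hTend ?_
  filter_upwards [eventually_gt_atTop 0] with N hN using key N hN

/-- Let `1 < p < ∞`, `α ∈ (0,1)`, `t > 0`, and let `v` be a weight on `ℝⁿ` with
`g(r) = ∫_{|y|<r} v^{-p'}` finite for every `r > 0`.  Then for every `x` with
`|x| > t`, the Hardy operator applied to the test function `f` satisfies
`Hf(x) ≥ (p'/(1-α)) g(|x|)^{(1-α)/p'}`. -/
theorem hardy_on_test_function (n : ℕ) (hn : 0 < n) (p : ℝ) (hp : 1 < p)
    (α : ℝ) (hα : α ∈ Ioo (0 : ℝ) 1) (t : ℝ) (ht : 0 < t)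
    (v : Rn n → ℝ) (hv : Measurable v)
    (hv' : ∀ᵐ x ∂(volume : Measure (Rn n)), 0 < v x)
    (hfin : ∀ r : ℝ, 0 < r →
      IntegrableOn (fun y => v y ^ (-(p / (p - 1)))) {y : Rn n | ‖y‖ < r}) :
    ∀ x : Rn n, t < ‖x‖ →
      (p / (p - 1) / (1 - α)) * gfun n p v ‖x‖ ^ ((1 - α) / (p / (p - 1)))
        ≤ hardy n (testFun n p α t v) x := by
  intro x hx
  set R := ‖x‖ with hRdef
  have hR : 0 < R := ht.trans hx
  have hp0 : 0 < p := lt_trans one_pos hp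
  have hp1 : 0 < p - 1 := by linarith
  have hq : 0 < p / (p - 1) := div_pos hp0 hp1
  obtain ⟨hα0, hα1⟩ := hα
  have h1α : 0 < 1 - α := by linarith
  set γ := (1 - α) / (p / (p - 1)) with hγdef
  have hγ0 : 0 < γ := div_pos h1α hq
  have hγ1 : γ < 1 := by
    rw [hγdef, div_lt_one hq]
    have : 1 < p / (p - 1) := (one_lt_div hp1).2 (by linarith)
    linarith
  set w : Rn n → ℝ := fun y => v y ^ (-(p / (p - 1))) with hwdef
  have hwmeas : Measurable w := by fun_prop
  have hw0 : ∀ᵐ y ∂(volume : Measure (Rn n)), 0 < w y :=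
    hv'.mono fun y hy => Real.rpow_pos_of_pos hy _
  have hw0' : ∀ᵐ y ∂(volume : Measure (Rn n)), 0 ≤ w y := hw0.mono fun y hy => hy.le
  have hfinw : ∀ r : ℝ, 0 < r → IntegrableOn w {y : Rn n | ‖y‖ < r} := hfin
  have hmono := Gb_mono hw0' hfinw
  have ha : 0 < Gb n w t := Gb_pos hw0 hfinw ht
  have hβγ : -(α / (p / (p - 1))) - 1 / p = γ - 1 := by
    rw [hγdef]; field_simp; ring
  set a := Gb n w t with hadef
  set b := Gb n w R with hbdef
  have hab : a ≤ b := hmono hx.le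
  have hsubset : {y : Rn n | ‖y‖ < t} ⊆ {y : Rn n | ‖y‖ < R} := ballSet_mono hx.le
  have hsetmt : MeasurableSet {y : Rn n | ‖y‖ < t} := measurableSet_ballSet t
  have hsetS : MeasurableSet ({y : Rn n | ‖y‖ < R} \ {y : Rn n | ‖y‖ < t}) :=
    (measurableSet_ballSet R).diff hsetmt
  have hF1 : EqOn (testFun n p α t v)
      (fun y => (p / (p - 1) / (1 - α) * a ^ (γ - 1)) * w y) {y : Rn n | ‖y‖ < t} := by
    intro y hy
    simp only [testFun, if_pos (show ‖y‖ < t from hy), hβγ]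
    rfl
  have hF2 : EqOn (testFun n p α t v)
      (fun y => Gb n w ‖y‖ ^ (γ - 1) * w y)
      ({y : Rn n | ‖y‖ < R} \ {y : Rn n | ‖y‖ < t}) := by
    intro y hy
    simp only [testFun, if_neg (show ¬ ‖y‖ < t from hy.2), hβγ]
    rfl
  have hIntBt : IntegrableOn (testFun n p α t v) {y : Rn n | ‖y‖ < t} := by
    have h1 : IntegrableOn (fun y => (p / (p - 1) / (1 - α) * a ^ (γ - 1)) * w y)
        {y : Rn n | ‖y‖ < t} := (hfinw t ht).const_mul _
    exact h1.congr_fun hF1.symm hsetmt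
  have hIntS : IntegrableOn (testFun n p α t v)
      ({y : Rn n | ‖y‖ < R} \ {y : Rn n | ‖y‖ < t}) := by
    have h1 := shell_integrable hwmeas hw0 hfinw hγ1.le ht hx.le
    exact IntegrableOn.congr_fun h1 hF2.symm hsetS
  have hunion : {y : Rn n | ‖y‖ < R} =
      {y : Rn n | ‖y‖ < t} ∪ ({y : Rn n | ‖y‖ < R} \ {y : Rn n | ‖y‖ < t}) :=
    (union_diff_cancel hsubset).symm
  have hsplit : hardy n (testFun n p α t v) x
      = (∫ y in {y : Rn n | ‖y‖ < t}, testFun n p α t v y)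
        + ∫ y in {y : Rn n | ‖y‖ < R} \ {y : Rn n | ‖y‖ < t}, testFun n p α t v y := by
    have h2 := setIntegral_union (f := testFun n p α t v) (μ := volume)
      disjoint_sdiff_self_right hsetS hIntBt hIntS
    rw [union_diff_cancel hsubset] at h2
    rw [hardy, ← hRdef]
    exact h2
  have hBt : ∫ y in {y : Rn n | ‖y‖ < t}, testFun n p α t v y
      = (p / (p - 1) / (1 - α) * a ^ (γ - 1)) * a := by
    rw [setIntegral_congr_fun hsetmt hF1, integral_const_mul]
    rfl
  have hSeq : ∫ y in {y : Rn n | ‖y‖ < R} \ {y : Rn n | ‖y‖ < t}, testFun n p α t v y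
      = ∫ y in {y : Rn n | ‖y‖ < R} \ {y : Rn n | ‖y‖ < t},
          Gb n w ‖y‖ ^ (γ - 1) * w y :=
    setIntegral_congr_fun hsetS hF2
  have hS := shell_bound hwmeas hw0 hfinw hγ0 hγ1.le ht hx.le
  rw [← hbdef, ← hadef] at hS
  have hgfunR : gfun n p v R = b := hbdef.symm
  rw [hsplit, hBt, hSeq, hgfunR]
  have h7 : a ^ (γ - 1) * a = a ^ γ := by
    have h9 : γ - 1 + 1 = γ := by ring
    rw [← Real.rpow_add_one ha.ne' (γ - 1), h9]
  have h8 : p / (p - 1) / (1 - α) = 1 / γ := by rw [hγdef, one_div_div]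
  have h10 : (1/γ) * (b ^ γ - a ^ γ) = (1/γ) * b ^ γ - (1/γ) * a ^ γ := by ring
  have h11 : p / (p - 1) / (1 - α) * a ^ (γ - 1) * a = (1/γ) * a ^ γ := by
    rw [mul_assoc, h7, h8]
  rw [h11, h8]
  linarith
end
end
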